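/- For any n ∈ ℕ, q > 0 and α ∈ ℝ, the (n+1)×(n+1) matrix L^{(q,α)} of change of basis from the q-Abel basis to the monomial basis — i.e., the lower triangular matrix with entries l_{1,1} = 1, l_{i,1} = 0 for i ≥ 2, and l_{i,j} = (-α[i-1])^{i-j} q^{binom(j-1,2)} qbinom(i-2, i-j) for 2 ≤ j ≤ i ≤ n+1 — factorizes as L^{(q,α)} = F_n F_{n-1} ⋯ F_1 D, where F_k is the lower bidiagonal matrix with unit diagonal and subdiagonal entries m_{i,j} in positions (i, i-1) active at level k (m_{i,1} := 0 for 2 ≤ i ≤ n+1 and m_{i,j} := -q^{j-2} ([i-1]/[i-2])^{i-j} [i-j] α for 2 ≤ j < i ≤ n+1), and D = diag(q^{binom(i-1,2)})_{i=1}^{n+1}. -/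

import Mathlib

open Finset Matrix

noncomputable def qInt (q : ℝ) (m : ℕ) : ℝ := ∑ i ∈ Finset.range m, q ^ i

noncomputable def qFact (q : ℝ) (m : ℕ) : ℝ := ∏ i ∈ Finset.range m, qInt q (i + 1)

noncomputable def qBinom (q : ℝ) (m k : ℕ) : ℝ :=
  if k ≤ m then qFact q m / (qFact q k * qFact q (m - k)) else 0

lemma qInt_pos {q : ℝ} (hq : 0 < q) {m : ℕ} (hm : 0 < m) : 0 < qInt q m := by
  apply Finset.sum_pos (fun i _ => pow_pos hq i)
  exact Finset.nonempty_range_iff.mpr (by omega : m ≠ 0)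

lemma qInt_ne {q : ℝ} (hq : 0 < q) {m : ℕ} (hm : 0 < m) : qInt q m ≠ 0 :=
  (qInt_pos hq hm).ne'

lemma qFact_pos {q : ℝ} (hq : 0 < q) (m : ℕ) : 0 < qFact q m :=
  Finset.prod_pos fun i _ => qInt_pos hq i.succ_pos

lemma qFact_ne {q : ℝ} (hq : 0 < q) (m : ℕ) : qFact q m ≠ 0 := (qFact_pos hq m).ne'

lemma qFact_succ (q : ℝ) (m : ℕ) : qFact q (m + 1) = qFact q m * qInt q (m + 1) :=
  Finset.prod_range_succ _ m

lemma qInt_add (q : ℝ) (a b : ℕ) : qInt q (a + b) = qInt q a + q ^ a * qInt q b := by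
  unfold qInt
  rw [Finset.sum_range_add, Finset.mul_sum]
  congr 1
  exact Finset.sum_congr rfl fun i _ => pow_add q a i

lemma qBinom_self {q : ℝ} (hq : 0 < q) (m : ℕ) : qBinom q m m = 1 := by
  unfold qBinom
  rw [if_pos le_rfl, Nat.sub_self]
  have : qFact q 0 = 1 := by simp [qFact]
  rw [this, mul_one, div_self (qFact_ne hq m)]

lemma qBinom_zero {q : ℝ} (hq : 0 < q) (m : ℕ) : qBinom q m 0 = 1 := by
  unfold qBinom
  rw [if_pos (Nat.zero_le m), Nat.sub_zero]
  have : qFact q 0 = 1 := by simp [qFact]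
  rw [this, one_mul, div_self (qFact_ne hq m)]

lemma qBinom_symm (q : ℝ) {m k : ℕ} (h : k ≤ m) : qBinom q m k = qBinom q m (m - k) := by
  unfold qBinom
  rw [if_pos h, if_pos (Nat.sub_le _ _), Nat.sub_sub_self h, mul_comm]

lemma qInt_core (q : ℝ) (a b v : ℕ) :
    qInt q (a+b+2) * qInt q (b+v+2)
      = qInt q (a+b+v+3) * qInt q (b+1) + q^(b+1) * qInt q (a+1) * qInt q (v+1) := by
  have h1 := qInt_add q (b+1) (a+1)
  have h2 := qInt_add q (b+v+2) (a+1)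
  have h3 := qInt_add q (v+1) (b+1)
  rw [show b+1+(a+1) = a+b+2 by omega] at h1
  rw [show b+v+2+(a+1) = a+b+v+3 by omega] at h2
  rw [show v+1+(b+1) = b+v+2 by omega] at h3
  linear_combination qInt q (b+v+2) * h1 - qInt q (b+1) * h2 + q^(b+1) * qInt q (a+1) * h3

lemma qBinom_star {q : ℝ} (hq : 0 < q) (a b v : ℕ) :
    qInt q (a+b+2) * qBinom q (b+v+2) (b+1)
      = qInt q (a+b+v+3) * qBinom q (b+v+1) b
        + q^(b+1) * qInt q (a+1) * qBinom q (b+v+1) (b+1) := by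
  unfold qBinom
  rw [if_pos (by omega : b+1 ≤ b+v+2), if_pos (by omega : b ≤ b+v+1),
      if_pos (by omega : b+1 ≤ b+v+1)]
  rw [show b+v+2 - (b+1) = v+1 by omega, show b+v+1 - b = v+1 by omega,
      show b+v+1 - (b+1) = v by omega]
  rw [show b+v+2 = (b+v+1)+1 by omega, qFact_succ, qFact_succ q b, qFact_succ q v]
  have Fb := qFact_ne hq b
  have Fv := qFact_ne hq v
  have Fbv := qFact_ne hq (b+v+1)
  have Ib := qInt_ne hq (show 0 < b+1 by omega)
  have Iv := qInt_ne hq (show 0 < v+1 by omega)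
  field_simp
  linear_combination qInt_core q a b v

lemma alg_h2 {R C C1 : ℝ} (hC : C ≠ 0) (hC1 : C1 ≠ 0) (k : ℕ) :
    (R / C1) ^ k * (C1 / C) ^ k = (R / C) ^ k := by
  rw [← mul_pow]
  congr 1
  field_simp

lemma alg0 (R A C1 α : ℝ) (a v : ℕ) (hA : A ≠ 0) (hC1 : C1 ≠ 0) :
    (-α)^(v+1) * R^(v+1) * (R/A)^a
      = (-α)^v * R^v * (R/C1)^(a+1) * (-(1:ℝ) * (C1/A)^(a+1) * A * α) := by
  have h2 := alg_h2 (R := R) hA hC1 (a+1)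
  have h3 : R / A * A = R := div_mul_cancel₀ R hA
  linear_combination (-((-α)^(v+1) * R^v * A)) * h2 + (-((-α)^(v+1) * R^v * (R/A)^a)) * h3

lemma alg1 (R C C1 X Y Z A P α : ℝ) (a v : ℕ) (hC : C ≠ 0) (hC1 : C1 ≠ 0)
    (hrel : C * X = R * Y + P * A * Z) :
    (-α)^(v+1) * R^(v+1) * (R/C)^a * X
      = (-α)^(v+1) * R^(v+1) * (R/C)^(a+1) * Y
        + (-α)^v * R^v * (R/C1)^(a+1) * Z * (-P * (C1/C)^(a+1) * A * α) := by
  have h2 := alg_h2 (R := R) hC hC1 (a+1)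
  have h3 : R / C * C = R := div_mul_cancel₀ R hC
  linear_combination (-((-α)^(v+1) * R^v * P * A * Z)) * h2
    + ((-α)^(v+1) * R^v * (R/C)^(a+1)) * hrel
    + (-((-α)^(v+1) * R^v * X * (R/C)^a)) * h3

noncomputable def Lmat (q α : ℝ) (n : ℕ) : Matrix (Fin (n + 1)) (Fin (n + 1)) ℝ :=
  Matrix.of fun i j =>
    if j.1 = 0 then (if i.1 = 0 then 1 else 0)
    else if j.1 ≤ i.1 then
      (-α * qInt q i.1) ^ (i.1 - j.1) * q ^ (j.1.choose 2) * qBinom q (i.1 - 1) (i.1 - j.1)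
    else 0

/-- The multipliers of the Neville elimination of `Lmat` (1-based indices). -/
noncomputable def mMult (q α : ℝ) (i j : ℕ) : ℝ :=
  if j = 1 then 0
  else -q ^ (j - 2) * (qInt q (i - 1) / qInt q (i - 2)) ^ (i - j) * qInt q (i - j) * α

/-- The lower bidiagonal factor `F_k` (for `1 ≤ k ≤ n`): unit diagonal, subdiagonal
entries `0` in rows `2,…,k` and `m_{k+1,1}, …, m_{n+1,n+1-k}` in rows `k+1,…,n+1`. -/
noncomputable def Fmat (q α : ℝ) (n k : ℕ) : Matrix (Fin (n + 1)) (Fin (n + 1)) ℝ :=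
  Matrix.of fun r c =>
    if r = c then 1
    else if r.1 = c.1 + 1 ∧ k ≤ r.1 then mMult q α (r.1 + 1) (r.1 + 1 - k) else 0


noncomputable def wrow (q α : ℝ) (r t c : ℕ) : ℝ :=
  if c = r then 1
  else if t ≤ c ∧ c < r then
    (-α) ^ (r - c) * qInt q r ^ (r - c) * (qInt q r / qInt q c) ^ (t - 1)
      * qBinom q (r - t) (c - t)
  else 0

lemma wrow_eq_formula {q α : ℝ} (hq : 0 < q) {r t c : ℕ} (ht : 1 ≤ t) (htc : t ≤ c)
    (hcr : c ≤ r) :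
    wrow q α r t c = (-α) ^ (r - c) * qInt q r ^ (r - c) * (qInt q r / qInt q c) ^ (t - 1)
      * qBinom q (r - t) (c - t) := by
  unfold wrow
  rcases eq_or_lt_of_le hcr with h | h
  · subst h
    rw [if_pos rfl, Nat.sub_self, div_self (qInt_ne hq (by omega : 0 < c)),
        qBinom_self hq]
    simp
  · rw [if_neg (by omega), if_pos ⟨htc, h⟩]

lemma wrow_rec {q α : ℝ} (hq : 0 < q) (r t c : ℕ) (ht : 1 ≤ t) :
    wrow q α r t c =
      wrow q α r (t + 1) c +
        wrow q α r (t + 1) (c + 1) *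
          (if t ≤ c + 1 then mMult q α (c + 2) (c + 2 - t) else 0) := by
  rcases lt_trichotomy c r with hcr | rfl | hcr
  · -- c < r
    by_cases htc : t ≤ c
    · -- main case
      obtain ⟨a, rfl⟩ : ∃ a, t = a + 1 := ⟨t - 1, by omega⟩
      obtain ⟨s, rfl⟩ : ∃ s, c = a + 1 + s := ⟨c - (a + 1), by omega⟩
      obtain ⟨v, rfl⟩ : ∃ v, r = a + 1 + s + (v + 1) := ⟨r - (a + 1 + s) - 1, by omega⟩
      have hIc : qInt q (a+1+s) ≠ 0 := qInt_ne hq (by omega)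
      have hIc1 : qInt q (a+1+s+1) ≠ 0 := qInt_ne hq (by omega)
      have hIr : qInt q (a+1+s+(v+1)) ≠ 0 := qInt_ne hq (by omega)
      rw [if_pos (by omega : a + 1 ≤ a + 1 + s + 1)]
      unfold mMult
      rw [if_neg (by omega : ¬(a + 1 + s + 2 - (a + 1) = 1))]
      rw [show a+1+s+2 - (a+1) = s+2 by omega, show s+2-2 = s by omega,
          show a+1+s+2-1 = a+1+s+1 by omega, show a+1+s+2-2 = a+1+s by omega,
          show a+1+s+2-(s+2) = a+1 by omega]
      rcases Nat.eq_zero_or_pos s with rfl | hs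
      · -- s = 0 : wrow r (t+1) c = 0
        simp only [Nat.add_zero]
        have h0 : wrow q α (a+1+(v+1)) (a+1+1) (a+1) = 0 := by
          unfold wrow; rw [if_neg (by omega), if_neg (by omega)]
        rw [h0, wrow_eq_formula hq (by omega) (by omega) (by omega),
            wrow_eq_formula hq (by omega) (by omega) (by omega)]
        rw [show a+1+(v+1) - (a+1+1) = v by omega,
            show a+1+(v+1) - (a+1) = v+1 by omega,
            show a+1+1 - (a+1+1) = 0 by omega,
            show a+1 - (a+1) = 0 by omega,
            show a+1+1-1 = a+1 by omega, show a+1-1 = a by omega]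
        rw [qBinom_zero hq, qBinom_zero hq]
        have hA : qInt q (a+1) ≠ 0 := qInt_ne hq (by omega)
        have hC1 : qInt q (a+1+1) ≠ 0 := qInt_ne hq (by omega)
        linear_combination alg0 (qInt q (a+1+(v+1))) (qInt q (a+1)) (qInt q (a+1+1)) α a v hA hC1
      · obtain ⟨b, rfl⟩ : ∃ b, s = b + 1 := ⟨s - 1, by omega⟩
        rw [wrow_eq_formula hq (by omega) (by omega) (by omega),
            wrow_eq_formula hq (by omega) (by omega) (by omega),
            wrow_eq_formula hq (by omega) (by omega) (by omega)]
        rw [show a+1+(b+1)+(v+1) - (a+1+(b+1)) = v+1 by omega,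
            show a+1+(b+1)+(v+1) - (a+1+(b+1)+1) = v by omega,
            show a+1+(b+1)+(v+1) - (a+1) = b+v+2 by omega,
            show a+1+(b+1)+(v+1) - (a+1+1) = b+v+1 by omega,
            show a+1+(b+1) - (a+1) = b+1 by omega,
            show a+1+(b+1) - (a+1+1) = b by omega,
            show a+1+(b+1)+1 - (a+1+1) = b+1 by omega,
            show a+1+1-1 = a+1 by omega, show a+1-1 = a by omega]
        have hstar := qBinom_star hq a b v
        have e1 : a+1+(b+1) = a+b+2 := by omega
        have e2 : a+1+(b+1)+(v+1) = a+b+v+3 := by omega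
        have e3 : a+1+(b+1)+1 = a+b+3 := by omega
        rw [e1, show a+b+2+(v+1) = a+b+v+3 by omega, show a+b+2+1 = a+b+3 by omega]
        have hC : qInt q (a+b+2) ≠ 0 := qInt_ne hq (by omega)
        have hC1 : qInt q (a+b+3) ≠ 0 := qInt_ne hq (by omega)
        linear_combination alg1 (qInt q (a+b+v+3)) (qInt q (a+b+2)) (qInt q (a+b+3))
          (qBinom q (b+v+2) (b+1)) (qBinom q (b+v+1) b) (qBinom q (b+v+1) (b+1))
          (qInt q (a+1)) (q^(b+1)) α a v hC hC1 hstar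
    · -- t > c : everything vanishes
      have h0 : wrow q α r t c = 0 := by
        unfold wrow; rw [if_neg (by omega), if_neg (by omega)]
      have h1 : wrow q α r (t+1) c = 0 := by
        unfold wrow; rw [if_neg (by omega), if_neg (by omega)]
      rw [h0, h1]
      by_cases h2 : t ≤ c + 1
      · have : t = c + 1 := by omega
        subst this
        rw [if_pos le_rfl]
        unfold mMult
        rw [if_pos (by omega : c + 2 - (c+1) = 1)]
        ring
      · rw [if_neg h2]; ring
  · -- c = r
    have h1 : wrow q α c t c = 1 := by unfold wrow; rw [if_pos rfl]
    have h2 : wrow q α c (t+1) c = 1 := by unfold wrow; rw [if_pos rfl]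
    have h3 : wrow q α c (t+1) (c+1) = 0 := by
      unfold wrow; rw [if_neg (by omega), if_neg (by omega)]
    rw [h1, h2, h3]; ring
  · -- c > r
    have h0 : wrow q α r t c = 0 := by
      unfold wrow; rw [if_neg (by omega), if_neg (by omega)]
    have h1 : wrow q α r (t+1) c = 0 := by
      unfold wrow; rw [if_neg (by omega), if_neg (by omega)]
    have h2 : wrow q α r (t+1) (c+1) = 0 := by
      unfold wrow; rw [if_neg (by omega), if_neg (by omega)]
    rw [h0, h1, h2]; ring

noncomputable def Wmat (q α : ℝ) (n t : ℕ) : Matrix (Fin (n + 1)) (Fin (n + 1)) ℝ :=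
  Matrix.of fun r c => wrow q α r.1 t c.1

lemma Wmat_top (q α : ℝ) (n : ℕ) : Wmat q α n (n + 1) = 1 := by
  ext r c
  by_cases h : r = c
  · subst h
    simp [Wmat, wrow, Matrix.one_apply]
  · have hv : c.1 ≠ r.1 := fun hh => h (Fin.ext hh.symm)
    have hc : c.1 < n + 1 := c.isLt
    simp only [Wmat, Matrix.of_apply, wrow, Matrix.one_apply, if_neg hv,
      if_neg (Ne.symm h)]
    rw [if_neg (by omega), if_neg h]

lemma Wmat_step {q α : ℝ} (hq : 0 < q) (n t : ℕ) (ht : 1 ≤ t) :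
    Wmat q α n (t + 1) * Fmat q α n t = Wmat q α n t := by
  ext r c
  rw [Matrix.mul_apply]
  by_cases hc : c.1 < n
  · have hcl : c.1 + 1 < n + 1 := by omega
    have hsum : ∀ x : Fin (n + 1), Wmat q α n (t + 1) r x * Fmat q α n t x c =
        (if x = c then wrow q α r.1 (t + 1) c.1 else 0) +
        (if x = (⟨c.1 + 1, hcl⟩ : Fin (n + 1)) then wrow q α r.1 (t + 1) (c.1 + 1) *
          (if t ≤ c.1 + 1 then mMult q α (c.1 + 2) (c.1 + 2 - t) else 0) else 0) := by
      intro x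
      simp only [Wmat, Fmat, Matrix.of_apply]
      by_cases h1 : x = c
      · rw [h1]
        have hx1 : ¬ (c = (⟨c.1 + 1, hcl⟩ : Fin (n + 1))) := by
          intro h; have := congrArg Fin.val h; simp at this
        rw [if_neg hx1, if_pos rfl, if_pos rfl, mul_one, add_zero]
      · by_cases h2 : x = (⟨c.1 + 1, hcl⟩ : Fin (n + 1))
        · rw [h2]
          have hne : ¬ ((⟨c.1 + 1, hcl⟩ : Fin (n + 1)) = c) := by
            intro h; have := congrArg Fin.val h; simp at this
          rw [if_neg hne, if_neg hne, if_pos rfl, zero_add]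
          show _ * (if c.1 + 1 = c.1 + 1 ∧ t ≤ c.1 + 1 then
            mMult q α (c.1 + 1 + 1) (c.1 + 1 + 1 - t) else 0) = _
          by_cases h3 : t ≤ c.1 + 1
          · rw [if_pos ⟨rfl, h3⟩, if_pos h3]
          · rw [if_neg (by omega), if_neg h3]
        · have hne2 : ¬ (x.1 = c.1 + 1 ∧ t ≤ x.1) := by
            intro hh
            exact h2 (Fin.ext hh.1)
          rw [if_neg h1, if_neg hne2, if_neg h1, if_neg h2, mul_zero, add_zero]
    rw [Finset.sum_congr rfl fun x _ => hsum x, Finset.sum_add_distrib,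
        Finset.sum_ite_eq' Finset.univ c, Finset.sum_ite_eq' Finset.univ,
        if_pos (Finset.mem_univ c), if_pos (Finset.mem_univ _)]
    show _ = Wmat q α n t r c
    simp only [Wmat, Matrix.of_apply]
    exact (wrow_rec hq r.1 t c.1 ht).symm
  · have hcn : c.1 = n := by omega
    have hsum : ∀ x : Fin (n + 1), Wmat q α n (t + 1) r x * Fmat q α n t x c =
        (if x = c then wrow q α r.1 (t + 1) c.1 else 0) := by
      intro x
      simp only [Wmat, Fmat, Matrix.of_apply]
      by_cases h1 : x = c
      · rw [h1, if_pos rfl, if_pos rfl, mul_one]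
      · have hne2 : ¬ (x.1 = c.1 + 1 ∧ t ≤ x.1) := by
          intro hh
          have := x.isLt; omega
        rw [if_neg h1, if_neg hne2, if_neg h1, mul_zero]
    rw [Finset.sum_congr rfl fun x _ => hsum x, Finset.sum_ite_eq' Finset.univ c,
        if_pos (Finset.mem_univ c)]
    have hrec := wrow_rec (α := α) hq r.1 t c.1 ht
    have hzero : wrow q α r.1 (t + 1) (c.1 + 1) = 0 := by
      have := r.isLt
      unfold wrow; rw [if_neg (by omega), if_neg (by omega)]
    rw [hzero, zero_mul, add_zero] at hrec
    show _ = Wmat q α n t r c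
    simp only [Wmat, Matrix.of_apply]
    exact hrec.symm

lemma prod_suffix {q α : ℝ} (hq : 0 < q) (n : ℕ) :
    ∀ m, m ≤ n → (((List.range' (n + 1 - m) m).reverse).map fun k => Fmat q α n k).prod
      = Wmat q α n (n + 1 - m) := by
  intro m
  induction m with
  | zero => intro _; simp [Wmat_top]
  | succ m ih =>
    intro hm
    have ht : 1 ≤ n - m := by omega
    rw [show n + 1 - (m + 1) = n - m by omega]
    rw [List.range'_succ, List.reverse_cons, List.map_append, List.prod_append]
    simp only [List.map_cons, List.map_nil, List.prod_cons, List.prod_nil, mul_one]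
    rw [show n - m + 1 = n + 1 - m by omega, ih (by omega),
        show n + 1 - m = (n - m) + 1 by omega]
    exact Wmat_step hq n (n - m) ht

theorem Lmat_bidiagonal_factorization (q α : ℝ) (hq : 0 < q) (n : ℕ) :
    Lmat q α n =
      (((List.range n).reverse).map fun k => Fmat q α n (k + 1)).prod *
        Matrix.diagonal (fun i : Fin (n + 1) => q ^ ((i : ℕ).choose 2)) := by
  have hlist : ((List.range n).reverse.map fun k => Fmat q α n (k + 1))
      = ((List.range' 1 n).reverse.map fun k => Fmat q α n k) := by
    rw [List.range'_eq_map_range, ← List.map_reverse, List.map_map]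
    congr 1
    funext k
    simp [Nat.add_comm]
  rw [hlist]
  have hp := prod_suffix (α := α) hq n n le_rfl
  rw [show n + 1 - n = 1 by omega] at hp
  rw [hp]
  ext r c
  rw [Matrix.mul_diagonal]
  show Lmat q α n r c = wrow q α r.1 1 c.1 * q ^ ((c : ℕ).choose 2)
  simp only [Lmat, Matrix.of_apply]
  by_cases hc0 : c.1 = 0
  · rw [if_pos hc0, hc0]
    by_cases hr0 : r.1 = 0
    · rw [if_pos hr0]
      unfold wrow
      rw [if_pos hr0.symm]
      norm_num
    · rw [if_neg hr0]
      unfold wrow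
      rw [if_neg (fun h => hr0 h.symm), if_neg (by omega)]
      ring
  · rw [if_neg hc0]
    by_cases hcr : c.1 ≤ r.1
    · rw [if_pos hcr]
      rw [wrow_eq_formula hq le_rfl (by omega) hcr]
      rw [qBinom_symm q (show c.1 - 1 ≤ r.1 - 1 by omega),
          show r.1 - 1 - (c.1 - 1) = r.1 - c.1 by omega,
          show (1 : ℕ) - 1 = 0 from rfl, pow_zero, mul_pow]
      ring
    · rw [if_neg hcr]
      unfold wrow
      rw [if_neg (by omega), if_neg (by omega)]
      ring
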